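/- Let M be an n×q real matrix, x ∈ ℝ^n, λ > 0, and let γ̂ ∈ ℝ^q be a minimizer of b ↦ ‖x − Mb‖₂²/(2n) + λ‖b‖₁, with residual z = x − Mγ̂. Then x^T z = ‖z‖₂² + nλ‖γ̂‖₁. Consequently, if z ≠ 0 then x^T z ≥ ‖z‖₂² > 0 and ‖z‖₂/|x^T z| ≤ 1/‖z‖₂. -/

import Mathlib

/-- inner-product identity `xᵀz = ‖z‖₂² + nλ‖γ̂‖₁` for the Lasso residual,
and its consequences. -/
theorem lasso_residual_inner_product
    (n q : ℕ) (hn : 0 < n) (M : Matrix (Fin n) (Fin q) ℝ) (x : Fin n → ℝ)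
    (lam : ℝ) (hlam : 0 < lam) (γ : Fin q → ℝ)
    (hγ : ∀ b : Fin q → ℝ,
      (∑ i, (x i - ∑ k, M i k * γ k) ^ 2) / (2 * n) + lam * ∑ k, |γ k| ≤
      (∑ i, (x i - ∑ k, M i k * b k) ^ 2) / (2 * n) + lam * ∑ k, |b k|)
    (z : Fin n → ℝ) (hz : z = fun i => x i - ∑ k, M i k * γ k) :
    (∑ i, x i * z i) = (∑ i, (z i) ^ 2) + n * lam * ∑ k, |γ k| ∧
    (z ≠ 0 →
      (∑ i, (z i) ^ 2) ≤ (∑ i, x i * z i) ∧ 0 < (∑ i, x i * z i) ∧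
      Real.sqrt (∑ i, (z i) ^ 2) / |∑ i, x i * z i| ≤ 1 / Real.sqrt (∑ i, (z i) ^ 2)) := by
  have nn : (0:ℝ) < n := by exact_mod_cast hn
  set S := ∑ k, |γ k| with hSdef
  have hS0 : 0 ≤ S := Finset.sum_nonneg fun k _ => abs_nonneg _
  set v : Fin n → ℝ := fun i => ∑ k, M i k * γ k with hv
  set A := ∑ i, x i * v i with hA
  set B := ∑ i, (v i)^2 with hB
  set X2 := ∑ i, (x i)^2 with hX2
  have hB0 : 0 ≤ B := Finset.sum_nonneg fun i _ => sq_nonneg _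
  -- key inequality from optimality at b = t • γ
  have key : ∀ t : ℝ, 0 ≤ t →
      (X2 - 2*A + B)/(2*n) + lam*S ≤ (X2 - 2*t*A + t^2*B)/(2*n) + lam*(t*S) := by
    intro t ht
    have h := hγ (fun k => t * γ k)
    have e1 : ∀ i, ∑ k, M i k * (t * γ k) = t * v i := by
      intro i
      rw [Finset.mul_sum]
      exact Finset.sum_congr rfl fun k _ => by ring
    have e2 : (∑ i, (x i - ∑ k, M i k * (t * γ k)) ^ 2) = X2 - 2*t*A + t^2*B := by
      have : ∀ i ∈ Finset.univ, (x i - ∑ k, M i k * (t * γ k)) ^ 2 =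
          (x i)^2 - 2*t*(x i * v i) + t^2 * (v i)^2 := by
        intro i _; rw [e1 i]; ring
      rw [Finset.sum_congr rfl this]
      simp [Finset.sum_add_distrib, Finset.sum_sub_distrib, ← Finset.mul_sum, hA, hB, hX2]
    have e3 : (∑ k, |t * γ k|) = t * S := by
      simp [abs_mul, abs_of_nonneg ht, ← Finset.mul_sum, hSdef]
    have e4 : (∑ i, (x i - ∑ k, M i k * γ k) ^ 2) = X2 - 2*A + B := by
      have : ∀ i ∈ Finset.univ, (x i - ∑ k, M i k * γ k) ^ 2 =
          (x i)^2 - 2*(x i * v i) + (v i)^2 := by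
        intro i _
        have : (∑ k, M i k * γ k) = v i := rfl
        rw [this]; ring
      rw [Finset.sum_congr rfl this]
      simp [Finset.sum_add_distrib, Finset.sum_sub_distrib, ← Finset.mul_sum, hA, hB, hX2]
    rw [e2, e3, e4] at h
    exact h
  -- set c, d
  set c := B/(2*n) with hc
  set d := lam*S - A/n with hd
  have key2 : ∀ t : ℝ, 0 ≤ t → c + d ≤ c*t^2 + d*t := by
    intro t ht
    have hpos : (0:ℝ) < 2*n := by positivity
    have hnne : (n:ℝ) ≠ 0 := nn.ne'
    have h2 := mul_le_mul_of_nonneg_right (key t ht) hpos.le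
    rw [add_mul, add_mul, div_mul_cancel₀ _ hpos.ne', div_mul_cancel₀ _ hpos.ne'] at h2
    refine le_of_mul_le_mul_right ?_ hpos
    have e : (c+d)*(2*n) = B + lam*S*(2*n) - 2*A := by rw [hc, hd]; field_simp; ring
    have e2 : (c*t^2+d*t)*(2*n) = t^2*B + lam*(t*S)*(2*n) - 2*t*A := by
      rw [hc, hd]; field_simp; ring
    rw [e, e2]; linarith [h2]
  have hc0 : 0 ≤ c := by rw [hc]; positivity
  have hcd : c + d ≤ 0 := by have := key2 0 le_rfl; linarith
  -- show 2c + d = 0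
  have main : 2*c + d = 0 := by
    rcases eq_or_lt_of_le hc0 with hceq | hcpos
    · -- c = 0
      have h2 := key2 2 (by norm_num)
      have h0 := key2 0 le_rfl
      rw [← hceq] at h2 h0 ⊢
      simp at h2 h0 ⊢
      linarith
    · -- c > 0
      have ht0 : (0:ℝ) ≤ -d/(2*c) := by
        apply div_nonneg _ (by linarith)
        linarith
      have h := key2 (-d/(2*c)) ht0
      have hcne : c ≠ 0 := ne_of_gt hcpos
      have hval : c*(-d/(2*c))^2 + d*(-d/(2*c)) = -d^2/(4*c) := by
        field_simp; ring
      rw [hval] at h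
      have hc4 : (0:ℝ) ≤ 4*c := by linarith
      have heq : 4*c*(-d^2/(4*c)) = -d^2 := by field_simp
      have h4 : 4*c*(c+d) ≤ -d^2 := heq ▸ mul_le_mul_of_nonneg_left h hc4
      have hsq : (2*c + d)^2 ≤ 0 := by nlinarith [h4]
      have : (2*c + d)^2 = 0 := le_antisymm hsq (sq_nonneg _)
      exact pow_eq_zero_iff (by norm_num) |>.mp this
  -- translate: A = B + n * lam * S
  have hABS : A = B + n * lam * S := by
    have hnne : (n:ℝ) ≠ 0 := nn.ne'
    have e : (n:ℝ)*(2*c+d) = B + n*lam*S - A := by rw [hc, hd]; field_simp; ring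
    rw [main, mul_zero] at e
    linarith
  -- express sums in terms of A, B, etc.
  have hxz : (∑ i, x i * z i) = X2 - A := by
    rw [hz]
    have : ∀ i ∈ Finset.univ, x i * (x i - ∑ k, M i k * γ k) = (x i)^2 - x i * v i := by
      intro i _
      have : (∑ k, M i k * γ k) = v i := rfl
      rw [this]; ring
    rw [Finset.sum_congr rfl this, Finset.sum_sub_distrib]
  have hzz : (∑ i, (z i)^2) = X2 - 2*A + B := by
    rw [hz]
    have : ∀ i ∈ Finset.univ, (x i - ∑ k, M i k * γ k)^2 =
        (x i)^2 - 2*(x i * v i) + (v i)^2 := by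
      intro i _
      have : (∑ k, M i k * γ k) = v i := rfl
      rw [this]; ring
    rw [Finset.sum_congr rfl this]
    simp [Finset.sum_add_distrib, Finset.sum_sub_distrib, ← Finset.mul_sum, hA, hB, hX2]
  have hmain : (∑ i, x i * z i) = (∑ i, (z i)^2) + n * lam * S := by
    rw [hxz, hzz]; linarith
  refine ⟨hmain, fun hzne => ?_⟩
  have hZpos : 0 < ∑ i, (z i)^2 := by
    obtain ⟨i, hi⟩ : ∃ i, z i ≠ 0 := by
      by_contra hcon
      push_neg at hcon
      exact hzne (funext hcon)
    apply Finset.sum_pos' (fun j _ => sq_nonneg _)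
    exact ⟨i, Finset.mem_univ i, by positivity⟩
  have hnlS : 0 ≤ (n:ℝ) * lam * S := by positivity
  have h1 : (∑ i, (z i)^2) ≤ ∑ i, x i * z i := by rw [hmain]; linarith
  have h2 : 0 < ∑ i, x i * z i := lt_of_lt_of_le hZpos h1
  refine ⟨h1, h2, ?_⟩
  have habs : |∑ i, x i * z i| = ∑ i, x i * z i := abs_of_pos h2
  rw [habs]
  set Z := ∑ i, (z i)^2 with hZ
  have hsqrtpos : 0 < Real.sqrt Z := Real.sqrt_pos.mpr hZpos
  have hZsq : Real.sqrt Z * Real.sqrt Z = Z := Real.mul_self_sqrt hZpos.le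
  rw [div_le_div_iff₀ h2 hsqrtpos]
  calc Real.sqrt Z * Real.sqrt Z = Z := hZsq
    _ ≤ ∑ i, x i * z i := h1
    _ = 1 * (∑ i, x i * z i) := (one_mul _).symm
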